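/- arXiv:2506.04566 — 2 statements merged into one kernel-verified Lean document; each statement's English description precedes it below -/
import Mathlib

section
/- Let X be a finite nonempty set, let Z and Z' be neighboring finite multisets of vectors z : X → ℝ with |Z| ≥ 3, and let x ∈ X be such that leftmed(Z)_x = rightmed(Z)_x. Then med(Z')_x = med(Z)_x; that is, the local sensitivity of the median in the x-th component is zero when the median gap in that component is zero. -/
open Real

/-- The left-median of a finite multiset of reals (see context):
    for sorted values `s_1 ≤ … ≤ s_N`, this is `s_k` when `N = 2k` or `N = 2k+1` (`N ≥ 2`),
    and `s_1` when `N = 1`. (0-indexed: `N/2 - 1`.) -/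
noncomputable def leftmed (S : Multiset ℝ) : ℝ :=
  if S.card = 1 then (S.sort (· ≤ ·)).getD 0 0
  else (S.sort (· ≤ ·)).getD (S.card / 2 - 1) 0

/-- The right-median: `s_{k+1}` when `N = 2k`, `s_{k+2}` when `N = 2k+1 ≥ 3`, `s_1` when `N = 1`. -/
noncomputable def rightmed (S : Multiset ℝ) : ℝ :=
  if S.card = 1 then (S.sort (· ≤ ·)).getD 0 0
  else if S.card % 2 = 0 then (S.sort (· ≤ ·)).getD (S.card / 2) 0
  else (S.sort (· ≤ ·)).getD (S.card / 2 + 1) 0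

/-- The median: `(s_k + s_{k+1})/2` when `N = 2k`, `s_{k+1}` when `N = 2k+1`. -/
noncomputable def med (S : Multiset ℝ) : ℝ :=
  if S.card = 1 then (S.sort (· ≤ ·)).getD 0 0
  else if S.card % 2 = 0 then
    ((S.sort (· ≤ ·)).getD (S.card / 2 - 1) 0 + (S.sort (· ≤ ·)).getD (S.card / 2) 0) / 2
  else (S.sort (· ≤ ·)).getD (S.card / 2) 0
/-- Two finite multisets are neighbors if one is obtained from the other by adding a single
    element (equivalently their symmetric difference has size 1). -/
def Neighbors {α : Type*} (Z Z' : Multiset α) : Prop :=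
  (∃ a, Z' = a ::ₘ Z) ∨ (∃ a, Z = a ::ₘ Z')

/-- The multiset `Z^{(x)}` of `x`-th components of a multiset of vectors. -/
def compAt {X : Type*} (Z : Multiset (X → ℝ)) (x : X) : Multiset ℝ :=
  Z.map (fun z => z x)

/-- Componentwise left-median of a multiset of vectors. -/
noncomputable def leftmedVec {X : Type*} (Z : Multiset (X → ℝ)) : X → ℝ :=
  fun x => leftmed (compAt Z x)

/-- Componentwise median of a multiset of vectors. -/
noncomputable def medVec {X : Type*} (Z : Multiset (X → ℝ)) : X → ℝ :=
  fun x => med (compAt Z x)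

/-- Componentwise right-median of a multiset of vectors. -/
noncomputable def rightmedVec {X : Type*} (Z : Multiset (X → ℝ)) : X → ℝ :=
  fun x => rightmed (compAt Z x)



private lemma getD_mono {l : List ℝ} (hl : l.Pairwise (· ≤ ·)) {i j : ℕ}
    (hij : i ≤ j) (hj : j < l.length) : l.getD i 0 ≤ l.getD j 0 := by
  rw [List.getD_eq_getElem l 0 (lt_of_le_of_lt hij hj), List.getD_eq_getElem l 0 hj]
  have := hl.rel_get_of_le (a := ⟨i, lt_of_le_of_lt hij hj⟩) (b := ⟨j, hj⟩)
    (Fin.mk_le_mk.mpr hij)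
  simpa using this

private lemma orderedInsert_getD_le (a : ℝ) :
    ∀ (l : List ℝ), l.Pairwise (· ≤ ·) → ∀ i, i < l.length →
      (l.orderedInsert (· ≤ ·) a).getD i 0 ≤ l.getD i 0 := by
  intro l
  induction l with
  | nil => intro _ i hi; simp at hi
  | cons b t ih =>
    intro hs i hi
    by_cases h : a ≤ b
    · rw [List.orderedInsert_cons_of_le _ _ h]
      match i with
      | 0 => simpa using h
      | j + 1 =>
        show (b :: t).getD j 0 ≤ (b :: t).getD (j+1) 0
        exact getD_mono hs (Nat.le_succ j) hi
    · rw [show (b :: t).orderedInsert (· ≤ ·) a = b :: t.orderedInsert (· ≤ ·) a from by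
        simp [List.orderedInsert, if_neg h]]
      match i with
      | 0 => simp
      | j + 1 =>
        simp only [List.getD_cons_succ]
        exact ih hs.of_cons j (by simpa using hi)

private lemma getD_le_orderedInsert (a : ℝ) :
    ∀ (l : List ℝ), l.Pairwise (· ≤ ·) → ∀ i, i < l.length →
      l.getD i 0 ≤ (l.orderedInsert (· ≤ ·) a).getD (i + 1) 0 := by
  intro l
  induction l with
  | nil => intro _ i hi; simp at hi
  | cons b t ih =>
    intro hs i hi
    by_cases h : a ≤ b
    · rw [List.orderedInsert_cons_of_le _ _ h]
      simp only [List.getD_cons_succ]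
      exact le_refl _
    · rw [show (b :: t).orderedInsert (· ≤ ·) a = b :: t.orderedInsert (· ≤ ·) a from by
        simp [List.orderedInsert, if_neg h]]
      match i with
      | 0 =>
        simp only [List.getD_cons_zero, List.getD_cons_succ]
        match t with
        | [] => simpa using (not_le.mp h).le
        | c :: t' =>
          by_cases h2 : a ≤ c
          · rw [List.orderedInsert_cons_of_le _ _ h2]
            simpa using (not_le.mp h).le
          · rw [show (c :: t').orderedInsert (· ≤ ·) a = c :: t'.orderedInsert (· ≤ ·) a from by
              simp [List.orderedInsert, if_neg h2]]
            simpa using (List.pairwise_cons.mp hs).1 c (by simp)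
      | j + 1 =>
        simp only [List.getD_cons_succ]
        exact ih hs.of_cons j (by simpa using hi)

private lemma sort_cons_eq (a : ℝ) (S : Multiset ℝ) :
    (a ::ₘ S).sort (· ≤ ·) = (S.sort (· ≤ ·)).orderedInsert (· ≤ ·) a := by
  refine List.Perm.eq_of_pairwise' (Multiset.pairwise_sort _ _)
    ((Multiset.pairwise_sort S _).orderedInsert a _) ?_
  have h1 : ((a ::ₘ S).sort (· ≤ ·) : Multiset ℝ) = (↑(a :: S.sort (· ≤ ·)) : Multiset ℝ) := by
    rw [← Multiset.cons_coe, Multiset.sort_eq, Multiset.sort_eq]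
  exact (Multiset.coe_eq_coe.mp h1).trans (List.perm_orderedInsert _ a _).symm

private lemma cons_getD_le (a : ℝ) (S : Multiset ℝ) {i : ℕ} (hi : i < S.card) :
    ((a ::ₘ S).sort (· ≤ ·)).getD i 0 ≤ (S.sort (· ≤ ·)).getD i 0 := by
  rw [sort_cons_eq]
  exact orderedInsert_getD_le a _ (Multiset.pairwise_sort _ _) i
    (by rw [Multiset.length_sort]; exact hi)

private lemma getD_le_cons (a : ℝ) (S : Multiset ℝ) {i : ℕ} (hi : i < S.card) :
    (S.sort (· ≤ ·)).getD i 0 ≤ ((a ::ₘ S).sort (· ≤ ·)).getD (i + 1) 0 := by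
  rw [sort_cons_eq]
  exact getD_le_orderedInsert a _ (Multiset.pairwise_sort _ _) i
    (by rw [Multiset.length_sort]; exact hi)

private lemma med_cons_eq (a : ℝ) (S : Multiset ℝ) (h3 : 3 ≤ S.card)
    (hgap : leftmed S = rightmed S) : med (a ::ₘ S) = med S := by
  have hsL : (S.sort (· ≤ ·)).Pairwise (· ≤ ·) := Multiset.pairwise_sort _ _
  have hlen : (S.sort (· ≤ ·)).length = S.card := Multiset.length_sort _
  have hcard' : (a ::ₘ S).card = S.card + 1 := Multiset.card_cons _ _
  obtain ⟨k, hk | hk⟩ := Nat.even_or_odd' S.card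
  · -- S.card = 2k, k ≥ 2
    have hk2 : 2 ≤ k := by omega
    have hm : (S.sort (· ≤ ·)).getD (k-1) 0 = (S.sort (· ≤ ·)).getD k 0 := by
      have h1 : leftmed S = (S.sort (· ≤ ·)).getD (k-1) 0 := by
        rw [leftmed, if_neg (by omega)]; congr 1; omega
      have h2 : rightmed S = (S.sort (· ≤ ·)).getD k 0 := by
        rw [rightmed, if_neg (by omega), if_pos (by omega)]; congr 1; omega
      rw [← h1, ← h2, hgap]
    have e1 : med (a ::ₘ S) = ((a ::ₘ S).sort (· ≤ ·)).getD k 0 := by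
      rw [med, hcard', if_neg (by omega), if_neg (by omega)]; congr 1; omega
    have e2 : med S = (S.sort (· ≤ ·)).getD k 0 := by
      rw [med, if_neg (by omega), if_pos (by omega)]
      rw [show S.card / 2 - 1 = k - 1 by omega, show S.card / 2 = k by omega, hm]
      ring
    rw [e1, e2]
    have up := cons_getD_le a S (i := k) (by omega)
    have lo := getD_le_cons a S (i := k-1) (by omega)
    rw [show k-1+1 = k by omega] at lo
    rw [hm] at lo
    exact le_antisymm up lo
  · -- S.card = 2k+1, k ≥ 1
    have hk1 : 1 ≤ k := by omega
    have hm1 : (S.sort (· ≤ ·)).getD (k-1) 0 = (S.sort (· ≤ ·)).getD (k+1) 0 := by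
      have h1 : leftmed S = (S.sort (· ≤ ·)).getD (k-1) 0 := by
        rw [leftmed, if_neg (by omega)]; congr 1; omega
      have h2 : rightmed S = (S.sort (· ≤ ·)).getD (k+1) 0 := by
        rw [rightmed, if_neg (by omega), if_neg (by omega)]; congr 1; omega
      rw [← h1, ← h2, hgap]
    have mono1 : (S.sort (· ≤ ·)).getD (k-1) 0 ≤ (S.sort (· ≤ ·)).getD k 0 :=
      getD_mono hsL (by omega) (by omega)
    have mono2 : (S.sort (· ≤ ·)).getD k 0 ≤ (S.sort (· ≤ ·)).getD (k+1) 0 :=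
      getD_mono hsL (by omega) (by omega)
    have hm2 : (S.sort (· ≤ ·)).getD (k-1) 0 = (S.sort (· ≤ ·)).getD k 0 := by linarith
    have hm3 : (S.sort (· ≤ ·)).getD k 0 = (S.sort (· ≤ ·)).getD (k+1) 0 := by linarith
    have e1 : med (a ::ₘ S) =
        (((a ::ₘ S).sort (· ≤ ·)).getD k 0 + ((a ::ₘ S).sort (· ≤ ·)).getD (k+1) 0) / 2 := by
      rw [med, hcard', if_neg (by omega), if_pos (by omega)]
      rw [show (S.card + 1) / 2 - 1 = k by omega, show (S.card + 1) / 2 = k + 1 by omega]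
    have e2 : med S = (S.sort (· ≤ ·)).getD k 0 := by
      rw [med, if_neg (by omega), if_neg (by omega)]; congr 1; omega
    have q1 : ((a ::ₘ S).sort (· ≤ ·)).getD k 0 = (S.sort (· ≤ ·)).getD k 0 := by
      have up := cons_getD_le a S (i := k) (by omega)
      have lo := getD_le_cons a S (i := k-1) (by omega)
      rw [show k-1+1 = k by omega, hm2] at lo
      exact le_antisymm up lo
    have q2 : ((a ::ₘ S).sort (· ≤ ·)).getD (k+1) 0 = (S.sort (· ≤ ·)).getD (k+1) 0 := by
      have up := cons_getD_le a S (i := k+1) (by omega)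
      have lo := getD_le_cons a S (i := k) (by omega)
      rw [hm3] at lo
      exact le_antisymm up lo
    rw [e1, e2, q1, q2, ← hm3]
    ring

private lemma med_erase_eq (a : ℝ) (S : Multiset ℝ) (h2 : 2 ≤ S.card)
    (hgap : leftmed (a ::ₘ S) = rightmed (a ::ₘ S)) : med S = med (a ::ₘ S) := by
  have hsL' : ((a ::ₘ S).sort (· ≤ ·)).Pairwise (· ≤ ·) := Multiset.pairwise_sort _ _
  have hlen' : ((a ::ₘ S).sort (· ≤ ·)).length = S.card + 1 := by
    rw [Multiset.length_sort, Multiset.card_cons]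
  have hcard' : (a ::ₘ S).card = S.card + 1 := Multiset.card_cons _ _
  obtain ⟨k, hk | hk⟩ := Nat.even_or_odd' S.card
  · -- S.card = 2k, k ≥ 1; cons has odd card 2k+1
    have hk1 : 1 ≤ k := by omega
    have hm1 : ((a ::ₘ S).sort (· ≤ ·)).getD (k-1) 0
        = ((a ::ₘ S).sort (· ≤ ·)).getD (k+1) 0 := by
      have h1 : leftmed (a ::ₘ S) = ((a ::ₘ S).sort (· ≤ ·)).getD (k-1) 0 := by
        rw [leftmed, hcard', if_neg (by omega)]; congr 1; omega
      have h2' : rightmed (a ::ₘ S) = ((a ::ₘ S).sort (· ≤ ·)).getD (k+1) 0 := by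
        rw [rightmed, hcard', if_neg (by omega), if_neg (by omega)]; congr 1; omega
      rw [← h1, ← h2', hgap]
    have mono1 : ((a ::ₘ S).sort (· ≤ ·)).getD (k-1) 0 ≤ ((a ::ₘ S).sort (· ≤ ·)).getD k 0 :=
      getD_mono hsL' (by omega) (by omega)
    have mono2 : ((a ::ₘ S).sort (· ≤ ·)).getD k 0 ≤ ((a ::ₘ S).sort (· ≤ ·)).getD (k+1) 0 :=
      getD_mono hsL' (by omega) (by omega)
    have hm2 : ((a ::ₘ S).sort (· ≤ ·)).getD (k-1) 0 = ((a ::ₘ S).sort (· ≤ ·)).getD k 0 := by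
      linarith
    have hm3 : ((a ::ₘ S).sort (· ≤ ·)).getD k 0 = ((a ::ₘ S).sort (· ≤ ·)).getD (k+1) 0 := by
      linarith
    have e1 : med (a ::ₘ S) = ((a ::ₘ S).sort (· ≤ ·)).getD k 0 := by
      rw [med, hcard', if_neg (by omega), if_neg (by omega)]; congr 1; omega
    have e2 : med S = ((S.sort (· ≤ ·)).getD (k-1) 0 + (S.sort (· ≤ ·)).getD k 0) / 2 := by
      rw [med, if_neg (by omega), if_pos (by omega)]
      rw [show S.card / 2 - 1 = k - 1 by omega, show S.card / 2 = k by omega]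
    have q1 : (S.sort (· ≤ ·)).getD (k-1) 0 = ((a ::ₘ S).sort (· ≤ ·)).getD k 0 := by
      have lo := cons_getD_le a S (i := k-1) (by omega)
      have up := getD_le_cons a S (i := k-1) (by omega)
      rw [show k-1+1 = k by omega] at up
      rw [hm2] at lo
      exact le_antisymm up lo
    have q2 : (S.sort (· ≤ ·)).getD k 0 = ((a ::ₘ S).sort (· ≤ ·)).getD k 0 := by
      have lo := cons_getD_le a S (i := k) (by omega)
      have up := getD_le_cons a S (i := k) (by omega)
      rw [← hm3] at up
      exact le_antisymm up lo
    rw [e1, e2, q1, q2]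
    ring
  · -- S.card = 2k+1, k ≥ 1; cons has even card 2k+2
    have hk1 : 1 ≤ k := by omega
    have hm : ((a ::ₘ S).sort (· ≤ ·)).getD k 0 = ((a ::ₘ S).sort (· ≤ ·)).getD (k+1) 0 := by
      have h1 : leftmed (a ::ₘ S) = ((a ::ₘ S).sort (· ≤ ·)).getD k 0 := by
        rw [leftmed, hcard', if_neg (by omega)]; congr 1; omega
      have h2' : rightmed (a ::ₘ S) = ((a ::ₘ S).sort (· ≤ ·)).getD (k+1) 0 := by
        rw [rightmed, hcard', if_neg (by omega), if_pos (by omega)]; congr 1; omega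
      rw [← h1, ← h2', hgap]
    have e1 : med (a ::ₘ S) =
        (((a ::ₘ S).sort (· ≤ ·)).getD k 0 + ((a ::ₘ S).sort (· ≤ ·)).getD (k+1) 0) / 2 := by
      rw [med, hcard', if_neg (by omega), if_pos (by omega)]
      rw [show (S.card + 1) / 2 - 1 = k by omega, show (S.card + 1) / 2 = k + 1 by omega]
    have e2 : med S = (S.sort (· ≤ ·)).getD k 0 := by
      rw [med, if_neg (by omega), if_neg (by omega)]; congr 1; omega
    have q : (S.sort (· ≤ ·)).getD k 0 = ((a ::ₘ S).sort (· ≤ ·)).getD k 0 := by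
      have lo := cons_getD_le a S (i := k) (by omega)
      have up := getD_le_cons a S (i := k) (by omega)
      rw [← hm] at up
      exact le_antisymm up lo
    rw [e1, e2, q, ← hm]
    ring

/-- For neighboring finite multisets `Z, Z'` of vectors in `ℝ^X`
    with `|Z| ≥ 3`, and any component `x` with zero median gap
    (`leftmed(Z)_x = rightmed(Z)_x`), the median in that component does not move:
    `med(Z')_x = med(Z)_x`. -/
theorem medVec_eq_of_median_gap_zero
    {X : Type*} [Fintype X] [Nonempty X]
    (Z Z' : Multiset (X → ℝ)) (hZZ' : Neighbors Z Z') (hZ : 3 ≤ Z.card)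
    (x : X) (hgap : leftmedVec Z x = rightmedVec Z x) :
    medVec Z' x = medVec Z x := by

  simp only [leftmedVec, rightmedVec] at hgap
  simp only [medVec]
  rcases hZZ' with ⟨a, rfl⟩ | ⟨a, hz⟩
  · rw [show compAt (a ::ₘ Z) x = a x ::ₘ compAt Z x from Multiset.map_cons _ _ _]
    exact med_cons_eq (a x) _ (by rw [compAt, Multiset.card_map]; exact hZ) hgap
  · subst hz
    rw [show compAt (a ::ₘ Z') x = a x ::ₘ compAt Z' x from Multiset.map_cons _ _ _] at hgap ⊢
    refine med_erase_eq (a x) _ ?_ hgap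
    have := hZ
    rw [Multiset.card_cons] at this
    rw [compAt, Multiset.card_map]
    omega
end

section
/- Let X be a finite nonempty token set, τ > 0, c > 0, n ≥ 1, and let logits be an arbitrary function from finite token sequences over X to ℝ^X. Let S and S' be neighboring finite multisets of token sequences with |S| ≥ 3 and |S'| ≥ 3. For a sequence y = (y_1, …, y_n) ∈ X^n and 1 ≤ t ≤ n, let y_{<t} = (y_1, …, y_{t−1}), let Z_t be the multiset {clip_c(logits(s · y_{<t})) : s ∈ S} (with multiplicity, one vector per element of S, where s · y_{<t} denotes concatenation), let Z'_t be defined analogously from S', and set P(y) = Π_{t=1}^n softmax_τ(med(Z_t))(y_t) and P'(y) = Π_{t=1}^n softmax_τ(med(Z'_t))(y_t). Then for every y ∈ X^n, Π_{t=1}^n α(Z_t, y_t) ≤ P(y)/P'(y) ≤ Π_{t=1}^n β(Z_t, y_t). -/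
open Real


lemma sorted_getD_mono {l : List ℝ} (h : l.Pairwise (· ≤ ·)) {i j : ℕ} (hij : i ≤ j)
    (hj : j < l.length) : l.getD i 0 ≤ l.getD j 0 := by
  rw [List.getD_eq_getElem _ _ (lt_of_le_of_lt hij hj), List.getD_eq_getElem _ _ hj]
  rcases eq_or_lt_of_le hij with rfl | hlt
  · exact le_refl _
  · exact List.pairwise_iff_getElem.mp h i j _ hj hlt

lemma sub_le1 {s t : List ℝ} (hsub : List.Sublist s t) (ht : t.Pairwise (· ≤ ·)) :
    ∀ i, i < s.length → t.getD i 0 ≤ s.getD i 0 := by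
  induction hsub with
  | slnil => intro i hi; simp at hi
  | @cons s t a h ih =>
    intro i hi
    have ht' : t.Pairwise (· ≤ ·) := ht.of_cons
    have hlen : s.length ≤ t.length := h.length_le
    cases i with
    | zero =>
      rw [List.getD_cons_zero, List.getD_eq_getElem _ _ hi]
      have hmem : s[0] ∈ t := h.subset (List.getElem_mem hi)
      exact List.rel_of_pairwise_cons ht hmem
    | succ k =>
      rw [List.getD_cons_succ]
      calc t.getD k 0 ≤ t.getD (k+1) 0 :=
            sorted_getD_mono ht' (Nat.le_succ k) (lt_of_lt_of_le hi hlen)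
        _ ≤ s.getD (k+1) 0 := ih ht' (k+1) hi
  | @cons_cons s t a h ih =>
    intro i hi
    have ht' : t.Pairwise (· ≤ ·) := ht.of_cons
    cases i with
    | zero => simp
    | succ k =>
      rw [List.getD_cons_succ, List.getD_cons_succ]
      exact ih ht' k (by simpa using hi)

lemma sub_le2 {s t : List ℝ} (hsub : List.Sublist s t) (ht : t.Pairwise (· ≤ ·))
    (hlen : t.length = s.length + 1) :
    ∀ i, i < s.length → s.getD i 0 ≤ t.getD (i + 1) 0 := by
  induction hsub with
  | slnil => intro i hi; simp at hi
  | @cons s t a h ih =>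
    have : s = t := h.eq_of_length (by simpa using hlen.symm)
    subst this
    intro i hi
    rw [List.getD_cons_succ]
  | @cons_cons s t a h ih =>
    have ht' : t.Pairwise (· ≤ ·) := ht.of_cons
    have hlen' : t.length = s.length + 1 := by simpa using hlen
    intro i hi
    cases i with
    | zero =>
      rw [List.getD_cons_zero, List.getD_cons_succ]
      have htne : 0 < t.length := by omega
      rw [List.getD_eq_getElem _ _ htne]
      exact List.rel_of_pairwise_cons ht (List.getElem_mem htne)
    | succ k =>
      rw [List.getD_cons_succ, List.getD_cons_succ]
      exact ih ht' hlen' k (by simpa using hi)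

lemma sort_sublist_cons (a : ℝ) (T : Multiset ℝ) :
    List.Sublist (T.sort (· ≤ ·)) ((a ::ₘ T).sort (· ≤ ·)) := by
  apply List.sublist_of_subperm_of_pairwise _ (Multiset.pairwise_sort _ _) (Multiset.pairwise_sort _ _)
  rw [← Multiset.coe_le, Multiset.sort_eq, Multiset.sort_eq]
  exact Multiset.le_cons_self T a


/-- `softmax_τ(z)(x) = exp(z_x/τ) / Σ_y exp(z_y/τ)`. -/
noncomputable def softmax {X : Type*} [Fintype X] (τ : ℝ) (z : X → ℝ) (x : X) : ℝ :=
  Real.exp (z x / τ) / ∑ y, Real.exp (z y / τ)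
/-- `clip_c(z)_i = max(−c, z_i − max_j z_j + c)`. -/
noncomputable def clip {X : Type*} [Fintype X] [Nonempty X] (c : ℝ) (z : X → ℝ) (i : X) : ℝ :=
  max (-c) (z i - Finset.univ.sup' Finset.univ_nonempty z + c)
/-- `α(Z, x) = exp((z̄_x − z̄^R_x)/τ) · (Σ_y exp(z̄^L_y/τ)) / (Σ_y exp(z̄_y/τ))`
    where `z̄ = med(Z)`, `z̄^L = leftmed(Z)`, `z̄^R = rightmed(Z)`. -/
noncomputable def alpha {X : Type*} [Fintype X] (τ : ℝ) (Z : Multiset (X → ℝ)) (x : X) : ℝ :=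
  Real.exp ((medVec Z x - rightmedVec Z x) / τ) *
    (∑ y, Real.exp (leftmedVec Z y / τ)) / (∑ y, Real.exp (medVec Z y / τ))

/-- `β(Z, x) = exp((z̄_x − z̄^L_x)/τ) · (Σ_y exp(z̄^R_y/τ)) / (Σ_y exp(z̄_y/τ))`. -/
noncomputable def beta {X : Type*} [Fintype X] (τ : ℝ) (Z : Multiset (X → ℝ)) (x : X) : ℝ :=
  Real.exp ((medVec Z x - leftmedVec Z x) / τ) *
    (∑ y, Real.exp (rightmedVec Z y / τ)) / (∑ y, Real.exp (medVec Z y / τ))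

/-- Per-token privacy cost `γ(Z, x) = max(log(1/α(Z, x)), log β(Z, x))`. -/
noncomputable def gamma {X : Type*} [Fintype X] (τ : ℝ) (Z : Multiset (X → ℝ)) (x : X) : ℝ :=
  max (Real.log (1 / alpha τ Z x)) (Real.log (beta τ Z x))

lemma med_between {T T' : Multiset ℝ} (h : Neighbors T T') (hT : 3 ≤ T.card)
    (hT' : 3 ≤ T'.card) : leftmed T ≤ med T' ∧ med T' ≤ rightmed T := by
  rcases h with ⟨a, rfl⟩ | ⟨a, rfl⟩
  · -- T' = a ::ₘ T
    have hsub := sort_sublist_cons a T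
    have hslen : (T.sort (· ≤ ·)).length = T.card := Multiset.length_sort _
    have htlen : ((a ::ₘ T).sort (· ≤ ·)).length = T.card + 1 := by
      rw [Multiset.length_sort, Multiset.card_cons]
    have hlen : ((a ::ₘ T).sort (· ≤ ·)).length = (T.sort (· ≤ ·)).length + 1 := by omega
    have hts : ((a ::ₘ T).sort (· ≤ ·)).Pairwise (· ≤ ·) := Multiset.pairwise_sort _ _
    have hss : (T.sort (· ≤ ·)).Pairwise (· ≤ ·) := Multiset.pairwise_sort _ _
    have h1 := sub_le1 hsub hts
    have h2 := sub_le2 hsub hts hlen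
    set s := T.sort (· ≤ ·) with hs
    set t := (a ::ₘ T).sort (· ≤ ·) with htd
    simp only [leftmed, med, rightmed, Multiset.card_cons, ← hs, ← htd]
    rw [if_neg (by omega : ¬ T.card = 1), if_neg (by omega : ¬ T.card = 1),
      if_neg (by omega : ¬ T.card + 1 = 1)]
    rcases Nat.even_or_odd T.card with ⟨k, hk⟩ | ⟨k, hk⟩
    · rw [if_neg (by omega : ¬ (T.card + 1) % 2 = 0),
        if_pos (by omega : T.card % 2 = 0)]
      have e1 : (T.card + 1) / 2 = k := by omega
      have e2 : T.card / 2 - 1 = k - 1 := by omega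
      have e3 : T.card / 2 = k := by omega
      rw [e1, e2, e3]
      constructor
      · have := h2 (k - 1) (by omega)
        have e4 : k - 1 + 1 = k := by omega
        rwa [e4] at this
      · exact h1 k (by omega)
    · rw [if_pos (by omega : (T.card + 1) % 2 = 0),
        if_neg (by omega : ¬ T.card % 2 = 0)]
      have e1 : (T.card + 1) / 2 - 1 = k := by omega
      have e2 : (T.card + 1) / 2 = k + 1 := by omega
      have e3 : T.card / 2 - 1 = k - 1 := by omega
      have e4 : T.card / 2 + 1 = k + 1 := by omega
      rw [e1, e2, e3, e4]
      have f1 : s.getD (k - 1) 0 ≤ t.getD k 0 := by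
        have := h2 (k - 1) (by omega); rwa [(by omega : k - 1 + 1 = k)] at this
      have f2 : s.getD k 0 ≤ t.getD (k + 1) 0 := h2 k (by omega)
      have f3 : t.getD k 0 ≤ s.getD k 0 := h1 k (by omega)
      have f4 : t.getD (k + 1) 0 ≤ s.getD (k + 1) 0 := h1 (k + 1) (by omega)
      have f5 : s.getD (k - 1) 0 ≤ s.getD k 0 := sorted_getD_mono hss (by omega) (by omega)
      have f6 : s.getD k 0 ≤ s.getD (k + 1) 0 := sorted_getD_mono hss (by omega) (by omega)
      constructor <;> [linarith; linarith]
  · -- T = a ::ₘ T'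
    have hsub := sort_sublist_cons a T'
    have htlen : (T'.sort (· ≤ ·)).length = T'.card := Multiset.length_sort _
    have hslen : ((a ::ₘ T').sort (· ≤ ·)).length = T'.card + 1 := by
      rw [Multiset.length_sort, Multiset.card_cons]
    have hlen : ((a ::ₘ T').sort (· ≤ ·)).length = (T'.sort (· ≤ ·)).length + 1 := by omega
    have hss : ((a ::ₘ T').sort (· ≤ ·)).Pairwise (· ≤ ·) := Multiset.pairwise_sort _ _
    have hts : (T'.sort (· ≤ ·)).Pairwise (· ≤ ·) := Multiset.pairwise_sort _ _
    have h1 := sub_le1 hsub hss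
    have h2 := sub_le2 hsub hss hlen
    set t := T'.sort (· ≤ ·) with htd
    set s := (a ::ₘ T').sort (· ≤ ·) with hs
    simp only [leftmed, med, rightmed, Multiset.card_cons, ← hs, ← htd]
    rw [if_neg (by omega : ¬ T'.card + 1 = 1), if_neg (by omega : ¬ T'.card = 1),
      if_neg (by omega : ¬ T'.card + 1 = 1)]
    rcases Nat.even_or_odd T'.card with ⟨k, hk⟩ | ⟨k, hk⟩
    · -- T'.card = 2k even, T.card = 2k+1 odd; k ≥ 2
      rw [if_pos (by omega : T'.card % 2 = 0),
        if_neg (by omega : ¬ (T'.card + 1) % 2 = 0)]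
      have e1 : T'.card / 2 - 1 = k - 1 := by omega
      have e2 : T'.card / 2 = k := by omega
      have e3 : (T'.card + 1) / 2 - 1 = k - 1 := by omega
      have e4 : (T'.card + 1) / 2 = k := by omega
      rw [e1, e3, e4, e2]
      have f1 : s.getD (k - 1) 0 ≤ t.getD (k - 1) 0 := h1 (k - 1) (by omega)
      have f2 : s.getD k 0 ≤ t.getD k 0 := h1 k (by omega)
      have f3 : t.getD (k - 1) 0 ≤ s.getD k 0 := by
        have := h2 (k - 1) (by omega); rwa [(by omega : k - 1 + 1 = k)] at this
      have f4 : t.getD k 0 ≤ s.getD (k + 1) 0 := h2 k (by omega)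
      have f5 : s.getD (k - 1) 0 ≤ s.getD k 0 := sorted_getD_mono hss (by omega) (by omega)
      have f6 : s.getD k 0 ≤ s.getD (k + 1) 0 := sorted_getD_mono hss (by omega) (by omega)
      constructor <;> [linarith; linarith]
    · -- T'.card = 2k+1 odd, T.card = 2k+2 even; k ≥ 1
      rw [if_neg (by omega : ¬ T'.card % 2 = 0),
        if_pos (by omega : (T'.card + 1) % 2 = 0)]
      have e1 : T'.card / 2 = k := by omega
      have e2 : (T'.card + 1) / 2 - 1 = k := by omega
      have e3 : (T'.card + 1) / 2 = k + 1 := by omega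
      rw [e1, e2, e3]
      constructor
      · exact h1 k (by omega)
      · exact h2 k (by omega)

lemma medVec_between {X : Type*} {Z Z' : Multiset (X → ℝ)} (h : Neighbors Z Z')
    (hZ : 3 ≤ Z.card) (hZ' : 3 ≤ Z'.card) (x : X) :
    leftmedVec Z x ≤ medVec Z' x ∧ medVec Z' x ≤ rightmedVec Z x := by
  have hn : Neighbors (compAt Z x) (compAt Z' x) := by
    rcases h with ⟨a, rfl⟩ | ⟨a, rfl⟩
    · exact Or.inl ⟨a x, by simp [compAt, Multiset.map_cons]⟩
    · exact Or.inr ⟨a x, by simp [compAt, Multiset.map_cons]⟩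
  exact med_between hn (by simpa [compAt] using hZ) (by simpa [compAt] using hZ')

lemma softmax_ratio_bounds {X : Type*} [Fintype X] {τ : ℝ} (hτ : 0 < τ)
    {Z Z' : Multiset (X → ℝ)} (h : Neighbors Z Z')
    (hZ : 3 ≤ Z.card) (hZ' : 3 ≤ Z'.card) (x : X) :
    alpha τ Z x ≤ softmax τ (medVec Z) x / softmax τ (medVec Z') x ∧
      softmax τ (medVec Z) x / softmax τ (medVec Z') x ≤ beta τ Z x := by
  have key := fun y => medVec_between h hZ hZ' y
  have hA : (0:ℝ) ≤ ∑ z, Real.exp (medVec Z z / τ) := by positivity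
  have hratio : softmax τ (medVec Z) x / softmax τ (medVec Z') x
      = Real.exp ((medVec Z x - medVec Z' x) / τ) *
          (∑ z, Real.exp (medVec Z' z / τ)) / (∑ z, Real.exp (medVec Z z / τ)) := by
    unfold softmax
    rw [div_div_div_comm, div_div_eq_mul_div, ← Real.exp_sub, ← sub_div]
  have hdiv : ∀ a b : ℝ, a ≤ b → a / τ ≤ b / τ := fun a b hab =>
    div_le_div_of_nonneg_right hab hτ.le
  have g1 : Real.exp ((medVec Z x - rightmedVec Z x) / τ)
      ≤ Real.exp ((medVec Z x - medVec Z' x) / τ) :=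
    Real.exp_le_exp.mpr (hdiv _ _ (sub_le_sub_left (key x).2 _))
  have g2 : (∑ z, Real.exp (leftmedVec Z z / τ)) ≤ ∑ z, Real.exp (medVec Z' z / τ) :=
    Finset.sum_le_sum fun z _ => Real.exp_le_exp.mpr (hdiv _ _ (key z).1)
  have g3 : Real.exp ((medVec Z x - medVec Z' x) / τ)
      ≤ Real.exp ((medVec Z x - leftmedVec Z x) / τ) :=
    Real.exp_le_exp.mpr (hdiv _ _ (sub_le_sub_left (key x).1 _))
  have g4 : (∑ z, Real.exp (medVec Z' z / τ)) ≤ ∑ z, Real.exp (rightmedVec Z z / τ) :=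
    Finset.sum_le_sum fun z _ => Real.exp_le_exp.mpr (hdiv _ _ (key z).2)
  rw [hratio]
  unfold alpha beta
  constructor
  · apply div_le_div_of_nonneg_right ?_ hA
    exact mul_le_mul g1 g2 (by positivity) (Real.exp_nonneg _)
  · apply div_le_div_of_nonneg_right ?_ hA
    exact mul_le_mul g3 g4 (by positivity) (Real.exp_nonneg _)

/-- Let `logits` be an arbitrary function from token sequences to logit
    vectors, and `S, S'` neighboring multisets of seed sequences with `|S| ≥ 3`, `|S'| ≥ 3`.
    For an output sequence `y ∈ X^n`, with per-step clipped logit multisets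
    `Z_t = {clip_c(logits(s · y_{<t})) : s ∈ S}` (and `Z'_t` from `S'`), the per-step
    output probabilities `P(y) = Π_t softmax_τ(med(Z_t))(y_t)` and
    `P'(y) = Π_t softmax_τ(med(Z'_t))(y_t)` satisfy
    `Π_t α(Z_t, y_t) ≤ P(y)/P'(y) ≤ Π_t β(Z_t, y_t)`. -/
theorem generation_ratio_alpha_beta_bounds
    {X : Type*} [Fintype X] [Nonempty X] (τ : ℝ) (hτ : 0 < τ) (c : ℝ) (hc : 0 < c)
    (n : ℕ) (hn : 1 ≤ n) (logits : List X → (X → ℝ))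
    (S S' : Multiset (List X)) (hSS' : Neighbors S S')
    (hS : 3 ≤ S.card) (hS' : 3 ≤ S'.card)
    (y : Fin n → X) (Z Z' : Fin n → Multiset (X → ℝ))
    (hZ : ∀ t : Fin n, Z t = S.map (fun s => clip c (logits (s ++ (List.ofFn y).take t.val))))
    (hZ' : ∀ t : Fin n, Z' t = S'.map (fun s => clip c (logits (s ++ (List.ofFn y).take t.val)))) :
    (∏ t : Fin n, alpha τ (Z t) (y t))
        ≤ (∏ t : Fin n, softmax τ (medVec (Z t)) (y t)) /
            (∏ t : Fin n, softmax τ (medVec (Z' t)) (y t)) ∧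
    (∏ t : Fin n, softmax τ (medVec (Z t)) (y t)) /
        (∏ t : Fin n, softmax τ (medVec (Z' t)) (y t))
      ≤ ∏ t : Fin n, beta τ (Z t) (y t) := by
  have hcZ : ∀ t : Fin n, (3:ℕ) ≤ (Z t).card := fun t => by
    rw [hZ t, Multiset.card_map]; exact hS
  have hcZ' : ∀ t : Fin n, (3:ℕ) ≤ (Z' t).card := fun t => by
    rw [hZ' t, Multiset.card_map]; exact hS'
  have hnb : ∀ t : Fin n, Neighbors (Z t) (Z' t) := by
    intro t
    rcases hSS' with ⟨a, ha⟩ | ⟨a, ha⟩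
    · exact Or.inl ⟨_, by rw [hZ' t, hZ t, ha, Multiset.map_cons]⟩
    · exact Or.inr ⟨_, by rw [hZ' t, hZ t, ha, Multiset.map_cons]⟩
  have step := fun t : Fin n => softmax_ratio_bounds hτ (hnb t) (hcZ t) (hcZ' t) (y t)
  rw [← Finset.prod_div_distrib]
  constructor
  · refine Finset.prod_le_prod (fun t _ => ?_) (fun t _ => (step t).1)
    unfold alpha
    positivity
  · refine Finset.prod_le_prod (fun t _ => ?_) (fun t _ => (step t).2)
    unfold softmax
    positivity
end
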